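/- Under the uniform ellipticity condition and the uniqueness condition, the bilinear form A_L(u,v) = ∫_Ω ( Σ_{i,j=1}^N a_{ij} (∂_{x_j}u)(∂_{x_i}v) + Σ_i ( b_i (∂_{x_i}u) v + c_i (∂_{x_i}v) u ) + d u v ) dx on W₀^{1,2}(Ω) is coercive with respect to the Dirichlet seminorm: there exists c₁ > 0 such that A_L(v,v) ≥ c₁ ∫_Ω |∇v|² dx for all v ∈ W₀^{1,2}(Ω). -/

import Mathlib

open MeasureTheory Metric Set Filter Topology
open scoped ENNReal NNReal Topology

noncomputable section

abbrev EucN (N : ℕ) := EuclideanSpace ℝ (Fin N)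

variable {N : ℕ}

/-- `ρ(x) = dist(x, ∂Ω)`, the distance to the boundary of `Ω`. -/
def rho (Ω : Set (EucN N)) (x : EucN N) : ℝ := Metric.infDist x (frontier Ω)

/-- The partial derivative `∂f/∂x_i` at `x`. -/
def pd (i : Fin N) (f : EucN N → ℝ) (x : EucN N) : ℝ :=
  fderiv ℝ f x (EuclideanSpace.single i 1)

/-- The formal adjoint `L*` of the divergence-form operator `L`:
`L*φ = Σ_{i,j} ∂_{x_j}(a_{ij} ∂_{x_i}φ) − Σ_j c_j ∂_{x_j}φ + Σ_j ∂_{x_j}(b_j φ) − dφ`. -/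
def Lstar (A : Fin N → Fin N → EucN N → ℝ) (b c : Fin N → EucN N → ℝ)
    (d : EucN N → ℝ) (φ : EucN N → ℝ) (x : EucN N) : ℝ :=
  (∑ i, ∑ j, pd j (fun y => A i j y * pd i φ y) x)
    - (∑ j, c j x * pd j φ x)
    + (∑ j, pd j (fun y => b j y * φ y) x)
    - d x * φ x

/-- The conormal derivative `∂φ/∂n_{L*} = Σ_{i,j} a_{ij} (∂_{x_i}φ) n_j`. -/
def conormal (A : Fin N → Fin N → EucN N → ℝ) (nv : EucN N → EucN N)
    (φ : EucN N → ℝ) (x : EucN N) : ℝ :=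
  ∑ i, ∑ j, A i j x * pd i φ x * nv x j

/-- The quantity `n · n Aᵀ = Σ_{i,j} a_{ji} n_i n_j`. -/
def nnA (A : Fin N → Fin N → EucN N → ℝ) (nv : EucN N → EucN N) (x : EucN N) : ℝ :=
  ∑ i, ∑ j, A j i x * nv x i * nv x j

/-- The `(N-1)`-dimensional Hausdorff (surface) measure. -/
def surf (N : ℕ) : Measure (EucN N) := Measure.hausdorffMeasure ((N : ℝ) - 1)

/-- The standing assumptions: `Ω` is a bounded domain, the coefficients are Lipschitz
continuous on `Ω`, the uniform ellipticity condition with constant `α`, and the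
uniqueness condition hold. -/
def EllipticSetting (Ω : Set (EucN N)) (A : Fin N → Fin N → EucN N → ℝ)
    (b c : Fin N → EucN N → ℝ) (d : EucN N → ℝ) (α : ℝ) : Prop :=
  IsOpen Ω ∧ Bornology.IsBounded Ω ∧ IsConnected Ω ∧
  (∀ i j, ∃ K : ℝ≥0, LipschitzOnWith K (A i j) Ω) ∧
  (∀ j, ∃ K : ℝ≥0, LipschitzOnWith K (b j) Ω) ∧
  (∀ j, ∃ K : ℝ≥0, LipschitzOnWith K (c j) Ω) ∧
  (∃ K : ℝ≥0, LipschitzOnWith K d Ω) ∧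
  0 < α ∧
  (∀ᵐ x ∂(volume.restrict Ω), ∀ ξ : EucN N,
      α * ‖ξ‖ ^ 2 ≤ ∑ i, ∑ j, A i j x * ξ i * ξ j) ∧
  (∀ v : EucN N → ℝ, ContDiff ℝ 1 v → HasCompactSupport v → tsupport v ⊆ Ω →
      (∀ x, 0 ≤ v x) →
      0 ≤ ∫ x in Ω, (d x * v x + ∑ j, (1 / 2 : ℝ) * (b j x + c j x) * pd j v x))

/-- The class `𝒢₀`: `g(x,·)` is continuous and nondecreasing, `g(x,0) = 0`, and
`g(·,t) ∈ L¹(Ω,ρ)` for every `t`. -/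
def MemG0 (Ω : Set (EucN N)) (g : EucN N → ℝ → ℝ) : Prop :=
  (∀ x ∈ Ω, Continuous fun t => g x t) ∧
  (∀ x ∈ Ω, Monotone fun t => g x t) ∧
  (∀ x ∈ Ω, g x 0 = 0) ∧
  (∀ t : ℝ, IntegrableOn (fun x => rho Ω x * g x t) Ω volume)

/-- Test functions `C_c^{2,L}(Ω̄)`: `φ ∈ C²(Ω̄)`, `φ = 0` on `∂Ω`, `L*φ ∈ L^∞(Ω)`. -/
def IsTestFun (Ω : Set (EucN N)) (A : Fin N → Fin N → EucN N → ℝ)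
    (b c : Fin N → EucN N → ℝ) (d : EucN N → ℝ) (φ : EucN N → ℝ) : Prop :=
  ContDiffOn ℝ 2 φ (closure Ω) ∧ (∀ x ∈ frontier Ω, φ x = 0) ∧
    ∃ M, ∀ x ∈ Ω, |Lstar A b c d φ x| ≤ M

/-- Very weak solution of `−Lu + g∘u = f` in `Ω`, `u = η` on `∂Ω` with `L¹` data. -/
def IsVWSolL1 (Ω : Set (EucN N)) (A : Fin N → Fin N → EucN N → ℝ)
    (b c : Fin N → EucN N → ℝ) (d : EucN N → ℝ) (nv : EucN N → EucN N)
    (g : EucN N → ℝ → ℝ) (f η u : EucN N → ℝ) : Prop :=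
  IntegrableOn u Ω volume ∧
  IntegrableOn (fun x => rho Ω x * g x (u x)) Ω volume ∧
  ∀ φ : EucN N → ℝ, IsTestFun Ω A b c d φ →
    (∫ x in Ω, (-(u x) * Lstar A b c d φ x + g x (u x) * φ x)) =
      (∫ x in Ω, f x * φ x) -
        ∫ x in frontier Ω, conormal A nv φ x * η x ∂(surf N)

/-- Integral of `φ` against the signed measure represented by the pair `(p, q)`. -/
def pInt (p q : Measure (EucN N)) (φ : EucN N → ℝ) : ℝ :=
  (∫ x, φ x ∂p) - (∫ x, φ x ∂q)

/-- The total variation distance between two (possibly infinite) measures;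
for `μ = p − q` this is the total variation norm `‖p − q‖`. -/
def tvDist (a b : Measure (EucN N)) : ℝ≥0∞ :=
  ⨆ (s : Set (EucN N)) (_ : MeasurableSet s), ((a s - b s) + (b sᶜ - a sᶜ))

/-- The measure `ρ·m`. -/
def wRho (Ω : Set (EucN N)) (m : Measure (EucN N)) : Measure (EucN N) :=
  m.withDensity fun x => ENNReal.ofReal (rho Ω x)

/-- Membership of the signed measure `(p, q)` in `𝔐(Ω,ρ)`. -/
def MemMRho (Ω : Set (EucN N)) (p q : Measure (EucN N)) : Prop :=
  p Ωᶜ = 0 ∧ q Ωᶜ = 0 ∧ p ⟂ₘ q ∧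
    (∫⁻ x, ENNReal.ofReal (rho Ω x) ∂(p + q)) < ⊤

/-- The norm in `𝔐(Ω,ρ)` of the signed measure `p − q`. -/
def normMRho (Ω : Set (EucN N)) (p q : Measure (EucN N)) : ℝ :=
  (tvDist (wRho Ω p) (wRho Ω q)).toReal

/-- Membership of the signed measure `(p, q)` in `𝔐(∂Ω)`. -/
def MemMBdry (Ω : Set (EucN N)) (p q : Measure (EucN N)) : Prop :=
  p (frontier Ω)ᶜ = 0 ∧ q (frontier Ω)ᶜ = 0 ∧ p ⟂ₘ q ∧
    p univ < ⊤ ∧ q univ < ⊤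

/-- The total variation norm in `𝔐(∂Ω)` of the signed measure `p − q`. -/
def normMBdry (p q : Measure (EucN N)) : ℝ := (tvDist p q).toReal

/-- Membership of the signed measure `(p, q)` in `𝔐(Ω̄)`. -/
def MemMBar (Ω : Set (EucN N)) (p q : Measure (EucN N)) : Prop :=
  p (closure Ω)ᶜ = 0 ∧ q (closure Ω)ᶜ = 0 ∧ p ⟂ₘ q ∧
    p univ < ⊤ ∧ q univ < ⊤

/-- Ordering of signed measures represented by pairs: `p₁ − n₁ ≤ p₂ − n₂`. -/
def pairLE (p₁ n₁ p₂ n₂ : Measure (EucN N)) : Prop :=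
  ∀ s : Set (EucN N), MeasurableSet s → p₁ s + n₂ s ≤ p₂ s + n₁ s

/-- Very weak solution of `−Lu + g∘u = μ` in `Ω`, `u = ν` on `∂Ω` with measure data,
the measures `μ, ν` being represented by the pairs `(μp, μn)` and `(νp, νn)`. -/
def IsVWSol (Ω : Set (EucN N)) (A : Fin N → Fin N → EucN N → ℝ)
    (b c : Fin N → EucN N → ℝ) (d : EucN N → ℝ) (nv : EucN N → EucN N)
    (g : EucN N → ℝ → ℝ) (μp μn νp νn : Measure (EucN N)) (u : EucN N → ℝ) : Prop :=
  IntegrableOn u Ω volume ∧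
  IntegrableOn (fun x => rho Ω x * g x (u x)) Ω volume ∧
  ∀ φ : EucN N → ℝ, IsTestFun Ω A b c d φ →
    (∫ x in Ω, (-(u x) * Lstar A b c d φ x + g x (u x) * φ x)) =
      pInt μp μn φ - pInt νp νn (fun x => conormal A nv φ x)

/-- `μ ∈ 𝔐^g(Ω)`: the problem with data `(μ, 0)` has a very weak solution. -/
def GoodInterior (Ω : Set (EucN N)) (A : Fin N → Fin N → EucN N → ℝ)
    (b c : Fin N → EucN N → ℝ) (d : EucN N → ℝ) (nv : EucN N → EucN N)
    (g : EucN N → ℝ → ℝ) (μp μn : Measure (EucN N)) : Prop :=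
  ∃ u, IsVWSol Ω A b c d nv g μp μn 0 0 u

/-- `ν ∈ 𝔐^g(∂Ω)`: the problem with data `(0, ν)` has a very weak solution. -/
def GoodBdry (Ω : Set (EucN N)) (A : Fin N → Fin N → EucN N → ℝ)
    (b c : Fin N → EucN N → ℝ) (d : EucN N → ℝ) (nv : EucN N → EucN N)
    (g : EucN N → ℝ → ℝ) (νp νn : Measure (EucN N)) : Prop :=
  ∃ u, IsVWSol Ω A b c d nv g 0 0 νp νn u

/-- Weak convergence `ν_n ⇀ ν` in `𝔐(∂Ω)`. -/
def WeakConvBdry (νp νn : ℕ → Measure (EucN N)) (ηp ηn : Measure (EucN N)) : Prop :=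
  ∀ h : EucN N → ℝ, Continuous h →
    Tendsto (fun n => pInt (νp n) (νn n) h) atTop (𝓝 (pInt ηp ηn h))

/-- Weak convergence `ρμ_n ⇀ τ` in `Ω̄`. -/
def WeakConvRho (Ω : Set (EucN N)) (μp μn : ℕ → Measure (EucN N))
    (τp τn : Measure (EucN N)) : Prop :=
  ∀ φ : EucN N → ℝ, Continuous φ →
    Tendsto (fun n => pInt (μp n) (μn n) fun x => φ x * rho Ω x) atTop
      (𝓝 (pInt τp τn φ))

/-- Weak convergence `ρ h_n ⇀ λ` in `Ω̄` for a sequence of functions `h_n ∈ L¹(Ω,ρ)`. -/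
def WeakConvRhoFun (Ω : Set (EucN N)) (h : ℕ → EucN N → ℝ)
    (lamP lamN : Measure (EucN N)) : Prop :=
  ∀ φ : EucN N → ℝ, Continuous φ →
    Tendsto (fun n => ∫ x in Ω, φ x * rho Ω x * h n x) atTop
      (𝓝 (pInt lamP lamN φ))

/-- The measure `(m/ρ)χ_Ω`. -/
def divRho (Ω : Set (EucN N)) (m : Measure (EucN N)) : Measure (EucN N) :=
  (m.restrict Ω).withDensity fun x => ENNReal.ofReal (rho Ω x)⁻¹

/-- The measure `(m/(n·nAᵀ))χ_{∂Ω}`. -/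
def divnnA (Ω : Set (EucN N)) (A : Fin N → Fin N → EucN N → ℝ)
    (nv : EucN N → EucN N) (m : Measure (EucN N)) : Measure (EucN N) :=
  (m.restrict (frontier Ω)).withDensity fun x => ENNReal.ofReal (nnA A nv x)⁻¹

/-- The measure on `Ω` with density the positive part of `h` w.r.t. Lebesgue measure. -/
def funMeas (Ω : Set (EucN N)) (h : EucN N → ℝ) : Measure (EucN N) :=
  (volume.restrict Ω).withDensity fun x => ENNReal.ofReal (h x)

/-- Membership in the local Sobolev space `W^{1,p}_loc(Ω)` (via a weak gradient). -/
def MemW1pLoc (Ω : Set (EucN N)) (p : ℝ≥0∞) (u : EucN N → ℝ) : Prop :=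
  ∃ v : Fin N → EucN N → ℝ,
    (∀ i, ∀ φ : EucN N → ℝ, ContDiff ℝ (⊤ : ℕ∞) φ → HasCompactSupport φ →
      tsupport φ ⊆ Ω →
      ∫ x in Ω, u x * pd i φ x = -∫ x in Ω, v i x * φ x) ∧
    ∀ K : Set (EucN N), IsCompact K → K ⊆ Ω →
      MemLp u p (volume.restrict K) ∧ ∀ i, MemLp (v i) p (volume.restrict K)

/-- Membership in `W₀^{1,2}(Ω)` with weak gradient `w`: `v, w ∈ L²(Ω)` and `v` is
approximable in the `W^{1,2}` norm by smooth compactly supported functions. -/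
def MemW012 (Ω : Set (EucN N)) (v : EucN N → ℝ) (w : Fin N → EucN N → ℝ) : Prop :=
  MemLp v 2 (volume.restrict Ω) ∧ (∀ i, MemLp (w i) 2 (volume.restrict Ω)) ∧
  ∃ φ : ℕ → EucN N → ℝ,
    (∀ k, ContDiff ℝ (⊤ : ℕ∞) (φ k) ∧ HasCompactSupport (φ k) ∧ tsupport (φ k) ⊆ Ω) ∧
    Tendsto (fun k => ∫ x in Ω, |φ k x - v x| ^ 2) atTop (𝓝 0) ∧
    ∀ i, Tendsto (fun k => ∫ x in Ω, |pd i (φ k) x - w i x| ^ 2) atTop (𝓝 0)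

/-- `u` possesses `M`-boundary trace `ν = (νp, νn)` on `∂Ω`. -/
def HasMTrace (Ω : Set (EucN N)) (u : EucN N → ℝ) (νp νn : Measure (EucN N)) : Prop :=
  ∀ Ωn : ℕ → Set (EucN N),
    (∀ n, IsOpen (Ωn n)) → (∀ n, closure (Ωn n) ⊆ Ωn (n + 1)) →
    (⋃ n, Ωn n) = Ω →
    ∀ h : EucN N → ℝ, Continuous h →
      Tendsto (fun n => ∫ x in frontier (Ωn n), u x * h x ∂(surf N)) atTop
        (𝓝 (pInt νp νn h))

/-- Convergence `u_n → u` in `L¹(Ω)`. -/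
def TendstoL1 (Ω : Set (EucN N)) (un : ℕ → EucN N → ℝ) (u : EucN N → ℝ) : Prop :=
  Tendsto (fun n => ∫ x in Ω, |un n x - u x|) atTop (𝓝 0)

/-- The growth condition `lim_{a,t→∞} g(x,at)/(a g(x,t)) = ∞` uniformly in `x ∈ Ω`. -/
def GrowthCond (Ω : Set (EucN N)) (g : EucN N → ℝ → ℝ) : Prop :=
  ∀ C : ℝ, ∃ a₀ t₀ : ℝ, 1 < a₀ ∧ 1 < t₀ ∧
    ∀ x ∈ Ω, ∀ a ≥ a₀, ∀ t ≥ t₀, C * (a * g x t) ≤ g x (a * t)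


section MyHelpers
variable {α : Type*} [MeasurableSpace α] {μ : Measure α}

lemma myIntMul {f g : α → ℝ} (hf : MemLp f 2 μ) (hg : MemLp g 2 μ) :
    Integrable (fun x => f x * g x) μ := by
  have h1 := ((hf.add hg).integrable_sq.sub hf.integrable_sq).sub hg.integrable_sq
  have h2 := h1.const_mul (1/2 : ℝ)
  refine h2.congr (Filter.Eventually.of_forall fun x => ?_)
  simp only [Pi.sub_apply, Pi.add_apply]
  ring

lemma myCS {f g : α → ℝ} (hf : MemLp f 2 μ) (hg : MemLp g 2 μ) :
    ∫ x, |f x * g x| ∂μ ≤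
      Real.sqrt (∫ x, (f x) ^ 2 ∂μ) * Real.sqrt (∫ x, (g x) ^ 2 ∂μ) := by
  have hpq : Real.HolderConjugate 2 2 := Real.HolderConjugate.two_two
  have h2 : (ENNReal.ofReal (2:ℝ)) = 2 := by norm_num
  have := integral_mul_norm_le_Lp_mul_Lq (μ := μ) hpq (h2 ▸ hf) (h2 ▸ hg)
  calc ∫ x, |f x * g x| ∂μ = ∫ x, ‖f x‖ * ‖g x‖ ∂μ := by
        simp [abs_mul, Real.norm_eq_abs]
    _ ≤ (∫ a, ‖f a‖ ^ (2:ℝ) ∂μ) ^ (1 / (2:ℝ)) * (∫ a, ‖g a‖ ^ (2:ℝ) ∂μ) ^ (1 / (2:ℝ)) := this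
    _ = Real.sqrt (∫ x, (f x) ^ 2 ∂μ) * Real.sqrt (∫ x, (g x) ^ 2 ∂μ) := by
        have hf' : ∫ a, ‖f a‖ ^ (2:ℝ) ∂μ = ∫ x, (f x) ^ 2 ∂μ := by
          refine integral_congr_ae (.of_forall fun x => ?_)
          show ‖f x‖ ^ (2:ℝ) = f x ^ 2
          rw [Real.norm_eq_abs, show (2:ℝ) = ((2:ℕ):ℝ) by norm_num, Real.rpow_natCast, sq_abs]
        have hg' : ∫ a, ‖g a‖ ^ (2:ℝ) ∂μ = ∫ x, (g x) ^ 2 ∂μ := by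
          refine integral_congr_ae (.of_forall fun x => ?_)
          show ‖g x‖ ^ (2:ℝ) = g x ^ 2
          rw [Real.norm_eq_abs, show (2:ℝ) = ((2:ℕ):ℝ) by norm_num, Real.rpow_natCast, sq_abs]
        rw [hf', hg', Real.sqrt_eq_rpow, Real.sqrt_eq_rpow]

lemma myTermBound {e p q : α → ℝ} {M' : ℝ} (hM0 : 0 ≤ M')
    (he : AEStronglyMeasurable e μ) (heM : ∀ᵐ x ∂μ, ‖e x‖ ≤ M')
    (hp : MemLp p 2 μ) (hq : MemLp q 2 μ) :
    ‖∫ x, e x * (p x * q x) ∂μ‖ ≤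
      M' * (Real.sqrt (∫ x, (p x) ^ 2 ∂μ) * Real.sqrt (∫ x, (q x) ^ 2 ∂μ)) := by
  have hpq : Integrable (fun x => p x * q x) μ := myIntMul hp hq
  have hI : Integrable (fun x => e x * (p x * q x)) μ := hpq.bdd_mul he heM
  calc ‖∫ x, e x * (p x * q x) ∂μ‖ ≤ ∫ x, ‖e x * (p x * q x)‖ ∂μ :=
        norm_integral_le_integral_norm _
    _ ≤ ∫ x, M' * |p x * q x| ∂μ := by
        refine integral_mono_ae hI.norm (hpq.abs.const_mul M') ?_
        filter_upwards [heM] with x hx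
        rw [norm_mul]
        exact mul_le_mul_of_nonneg_right hx (abs_nonneg _)
    _ = M' * ∫ x, |p x * q x| ∂μ := integral_const_mul _ _
    _ ≤ M' * (Real.sqrt (∫ x, (p x) ^ 2 ∂μ) * Real.sqrt (∫ x, (q x) ^ 2 ∂μ)) :=
        mul_le_mul_of_nonneg_left (myCS hp hq) hM0

lemma myKey {e : α → ℝ} {M : ℝ} (he : AEStronglyMeasurable e μ) (heM : ∀ᵐ x ∂μ, ‖e x‖ ≤ M)
    {f g : α → ℝ} (hf : MemLp f 2 μ) (hg : MemLp g 2 μ)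
    {fk gk : ℕ → α → ℝ} (hfk : ∀ k, MemLp (fk k) 2 μ) (hgk : ∀ k, MemLp (gk k) 2 μ)
    (hfc : Tendsto (fun k => ∫ x, |fk k x - f x| ^ 2 ∂μ) atTop (𝓝 0))
    (hgc : Tendsto (fun k => ∫ x, |gk k x - g x| ^ 2 ∂μ) atTop (𝓝 0)) :
    Tendsto (fun k => ∫ x, e x * gk k x * fk k x ∂μ) atTop (𝓝 (∫ x, e x * g x * f x ∂μ)) := by
  set M' : ℝ := max M 0 with hM'def
  have hM0 : 0 ≤ M' := le_max_right _ _
  have heM' : ∀ᵐ x ∂μ, ‖e x‖ ≤ M' := heM.mono fun x hx => hx.trans (le_max_left _ _)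
  set df : ℕ → α → ℝ := fun k x => fk k x - f x with hdf
  set dg : ℕ → α → ℝ := fun k x => gk k x - g x with hdg
  have hdf2 : ∀ k, MemLp (df k) 2 μ := fun k => (hfk k).sub hf
  have hdg2 : ∀ k, MemLp (dg k) 2 μ := fun k => (hgk k).sub hg
  have hsqf : ∀ k, ∫ x, (df k x) ^ 2 ∂μ = ∫ x, |fk k x - f x| ^ 2 ∂μ :=
    fun k => integral_congr_ae (.of_forall fun x => (sq_abs _).symm)
  have hsqg : ∀ k, ∫ x, (dg k x) ^ 2 ∂μ = ∫ x, |gk k x - g x| ^ 2 ∂μ :=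
    fun k => integral_congr_ae (.of_forall fun x => (sq_abs _).symm)
  have I1 : ∀ k, Integrable (fun x => e x * (dg k x * df k x)) μ :=
    fun k => (myIntMul (hdg2 k) (hdf2 k)).bdd_mul he heM'
  have I2 : ∀ k, Integrable (fun x => e x * (dg k x * f x)) μ :=
    fun k => (myIntMul (hdg2 k) hf).bdd_mul he heM'
  have I3 : ∀ k, Integrable (fun x => e x * (g x * df k x)) μ :=
    fun k => (myIntMul hg (hdf2 k)).bdd_mul he heM'
  have I4 : Integrable (fun x => e x * (g x * f x)) μ := (myIntMul hg hf).bdd_mul he heM'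
  have hid : ∀ k, (∫ x, e x * gk k x * fk k x ∂μ) - (∫ x, e x * g x * f x ∂μ) =
      (∫ x, e x * (dg k x * df k x) ∂μ) + ((∫ x, e x * (dg k x * f x) ∂μ) +
        ((∫ x, e x * (g x * df k x) ∂μ))) := by
    intro k
    have h1 : ∫ x, e x * gk k x * fk k x ∂μ =
        ∫ x, (e x * (dg k x * df k x) + (e x * (dg k x * f x) +
          (e x * (g x * df k x) + e x * (g x * f x)))) ∂μ := by
      refine integral_congr_ae (.of_forall fun x => ?_)
      simp only [hdf, hdg]
      ring
    have e34 : (∫ x, (e x * (g x * df k x) + e x * (g x * f x)) ∂μ) =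
        (∫ x, e x * (g x * df k x) ∂μ) + ∫ x, e x * (g x * f x) ∂μ := integral_add (I3 k) I4
    have e234 : (∫ x, (e x * (dg k x * f x) + (e x * (g x * df k x) + e x * (g x * f x))) ∂μ) =
        (∫ x, e x * (dg k x * f x) ∂μ) +
          ∫ x, (e x * (g x * df k x) + e x * (g x * f x)) ∂μ :=
      integral_add (I2 k) ((I3 k).add I4)
    have e1234 : (∫ x, (e x * (dg k x * df k x) + (e x * (dg k x * f x) +
        (e x * (g x * df k x) + e x * (g x * f x)))) ∂μ) =
        (∫ x, e x * (dg k x * df k x) ∂μ) +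
          ∫ x, (e x * (dg k x * f x) + (e x * (g x * df k x) + e x * (g x * f x))) ∂μ :=
      integral_add (I1 k) ((I2 k).add ((I3 k).add I4))
    have hB : (∫ x, e x * g x * f x ∂μ) = ∫ x, e x * (g x * f x) ∂μ :=
      integral_congr_ae (.of_forall fun x => by ring)
    rw [h1, e1234, e234, e34, hB]
    ring
  rw [← tendsto_sub_nhds_zero_iff]
  set F : ℝ := Real.sqrt (∫ x, (f x) ^ 2 ∂μ)
  set G : ℝ := Real.sqrt (∫ x, (g x) ^ 2 ∂μ)
  have hsa : Tendsto (fun k => Real.sqrt (∫ x, (df k x) ^ 2 ∂μ)) atTop (𝓝 0) := by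
    have h := hfc.sqrt
    rw [Real.sqrt_zero] at h
    exact h.congr fun k => (congrArg Real.sqrt (hsqf k)).symm
  have hsb : Tendsto (fun k => Real.sqrt (∫ x, (dg k x) ^ 2 ∂μ)) atTop (𝓝 0) := by
    have h := hgc.sqrt
    rw [Real.sqrt_zero] at h
    exact h.congr fun k => (congrArg Real.sqrt (hsqg k)).symm
  have hS : Tendsto (fun k => M' * (Real.sqrt (∫ x, (dg k x) ^ 2 ∂μ) *
      Real.sqrt (∫ x, (df k x) ^ 2 ∂μ)) +
      (M' * (Real.sqrt (∫ x, (dg k x) ^ 2 ∂μ) * F) +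
        M' * (G * Real.sqrt (∫ x, (df k x) ^ 2 ∂μ)))) atTop (𝓝 0) := by
    have h1 := ((hsb.mul hsa).const_mul M').add
      (((hsb.mul_const F).const_mul M').add ((hsa.const_mul G).const_mul M'))
    simpa using h1
  refine squeeze_zero_norm (fun k => ?_) hS
  rw [hid k]
  calc ‖_ + (_ + _)‖ ≤ ‖∫ x, e x * (dg k x * df k x) ∂μ‖ +
        (‖∫ x, e x * (dg k x * f x) ∂μ‖ + ‖∫ x, e x * (g x * df k x) ∂μ‖) :=
        (norm_add_le _ _).trans (by gcongr; exact norm_add_le _ _)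
    _ ≤ _ := by
        refine add_le_add (myTermBound hM0 he heM' (hdg2 k) (hdf2 k)) (add_le_add
          (myTermBound hM0 he heM' (hdg2 k) hf) ?_)
        exact myTermBound hM0 he heM' hg (hdf2 k)

end MyHelpers

lemma myBdd {Ω : Set (EucN N)} (hbdd : Bornology.IsBounded Ω) {K : ℝ≥0}
    {f : EucN N → ℝ} (h : LipschitzOnWith K f Ω) :
    ∃ M : ℝ, ∀ x ∈ Ω, ‖f x‖ ≤ M := by
  rcases Ω.eq_empty_or_nonempty with hΩ | ⟨x₀, hx₀⟩
  · exact ⟨0, fun x hx => by simp [hΩ] at hx⟩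
  · obtain ⟨C, hC⟩ := Metric.isBounded_iff.1 hbdd
    refine ⟨‖f x₀‖ + K * C, fun x hx => ?_⟩
    have h1 : dist (f x) (f x₀) ≤ K * dist x x₀ := h.dist_le_mul x hx x₀ hx₀
    have h2 : dist x x₀ ≤ C := hC hx hx₀
    have h3 : ‖f x‖ ≤ ‖f x₀‖ + dist (f x) (f x₀) := by
      rw [dist_eq_norm]
      have := norm_add_le (f x₀) (f x - f x₀)
      simpa using this
    have h4 : (K : ℝ) * dist x x₀ ≤ K * C :=
      mul_le_mul_of_nonneg_left h2 K.coe_nonneg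
    linarith
lemma myAeBdd {Ω : Set (EucN N)} (hbdd : Bornology.IsBounded Ω) (hmeas : MeasurableSet Ω)
    {K : ℝ≥0} {f : EucN N → ℝ} (h : LipschitzOnWith K f Ω) :
    ∃ M : ℝ, ∀ᵐ x ∂(volume.restrict Ω), ‖f x‖ ≤ M := by
  obtain ⟨M, hM⟩ := myBdd hbdd h
  exact ⟨M, by filter_upwards [ae_restrict_mem hmeas] with x hx using hM x hx⟩

lemma myPdSq {φ : EucN N → ℝ} (hφ : Differentiable ℝ φ) (j : Fin N) (x : EucN N) :
    pd j (fun y => φ y * φ y) x = 2 * (φ x * pd j φ x) := by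
  unfold pd
  rw [fderiv_fun_mul (hφ x) (hφ x)]
  simp only [ContinuousLinearMap.add_apply, ContinuousLinearMap.smul_apply, smul_eq_mul]
  ring

lemma myPdCont {φ : EucN N → ℝ} (hφ : ContDiff ℝ (⊤ : ℕ∞) φ) (i : Fin N) :
    Continuous (pd i φ) :=
  (hφ.continuous_fderiv (by simp)).clm_apply continuous_const

lemma myPdCS {φ : EucN N → ℝ} (hφ : HasCompactSupport φ) (i : Fin N) :
    HasCompactSupport (pd i φ) :=
  hφ.fderiv_apply ℝ (EuclideanSpace.single i 1)

lemma myMemL2 {Ω : Set (EucN N)} {φ : EucN N → ℝ} (hc : Continuous φ)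
    (hcs : HasCompactSupport φ) : MemLp φ 2 (volume.restrict Ω) :=
  (hc.memLp_of_hasCompactSupport hcs).restrict Ω

theorem stmt_3 {N : ℕ}
    (Ω : Set (EucN N)) (A : Fin N → Fin N → EucN N → ℝ)
    (b c : Fin N → EucN N → ℝ) (d : EucN N → ℝ) (α : ℝ)
    (hset : EllipticSetting Ω A b c d α) :
    ∃ c₁ > (0 : ℝ), ∀ v : EucN N → ℝ, ∀ w : Fin N → EucN N → ℝ,
      MemW012 Ω v w →
      c₁ * (∫ x in Ω, ∑ i, (w i x) ^ 2) ≤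
        ∫ x in Ω, ((∑ i, ∑ j, A i j x * w j x * w i x)
          + (∑ i, (b i x * w i x * v x + c i x * w i x * v x))
          + d x * v x * v x) := by
  obtain ⟨hopen, hbdd, -, hA, hb, hc, hd, hα, hell, huniq⟩ := hset
  have hmeas : MeasurableSet Ω := hopen.measurableSet
  refine ⟨α, hα, ?_⟩
  intro v w hvw
  obtain ⟨hv2, hw2, φ, hφprop, hφv, hφw⟩ := hvw
  -- measurability and bounds for coefficients
  have hAesm : ∀ i j, AEStronglyMeasurable (A i j) (volume.restrict Ω) := fun i j =>
    ((hA i j).choose_spec.continuousOn).aestronglyMeasurable hmeas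
  have hbesm : ∀ i, AEStronglyMeasurable (b i) (volume.restrict Ω) := fun i =>
    ((hb i).choose_spec.continuousOn).aestronglyMeasurable hmeas
  have hcesm : ∀ i, AEStronglyMeasurable (c i) (volume.restrict Ω) := fun i =>
    ((hc i).choose_spec.continuousOn).aestronglyMeasurable hmeas
  have hdesm : AEStronglyMeasurable d (volume.restrict Ω) :=
    (hd.choose_spec.continuousOn).aestronglyMeasurable hmeas
  have hAbd : ∀ i j, ∃ M : ℝ, ∀ᵐ x ∂(volume.restrict Ω), ‖A i j x‖ ≤ M := fun i j =>
    myAeBdd hbdd hmeas (hA i j).choose_spec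
  have hbbd : ∀ i, ∃ M : ℝ, ∀ᵐ x ∂(volume.restrict Ω), ‖b i x‖ ≤ M := fun i =>
    myAeBdd hbdd hmeas (hb i).choose_spec
  have hcbd : ∀ i, ∃ M : ℝ, ∀ᵐ x ∂(volume.restrict Ω), ‖c i x‖ ≤ M := fun i =>
    myAeBdd hbdd hmeas (hc i).choose_spec
  have hdbd : ∃ M : ℝ, ∀ᵐ x ∂(volume.restrict Ω), ‖d x‖ ≤ M := myAeBdd hbdd hmeas hd.choose_spec
  -- L² facts for the approximating sequence
  have hφ2 : ∀ k, MemLp (φ k) 2 (volume.restrict Ω) := fun k =>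
    myMemL2 (hφprop k).1.continuous (hφprop k).2.1
  have hpd2 : ∀ k i, MemLp (pd i (φ k)) 2 (volume.restrict Ω) := fun k i =>
    myMemL2 (myPdCont (hφprop k).1 i) (myPdCS (hφprop k).2.1 i)
  -- integrability of the various products (for the limit functions)
  have IA : ∀ i j, Integrable (fun x => A i j x * w j x * w i x) (volume.restrict Ω) :=
    fun i j => ((myIntMul (hw2 j) (hw2 i)).bdd_mul (hAesm i j) (hAbd i j).choose_spec).congr
      (.of_forall fun x => (mul_assoc _ _ _).symm)
  have Ib : ∀ i, Integrable (fun x => b i x * w i x * v x) (volume.restrict Ω) :=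
    fun i => ((myIntMul (hw2 i) hv2).bdd_mul (hbesm i) (hbbd i).choose_spec).congr
      (.of_forall fun x => (mul_assoc _ _ _).symm)
  have Ic : ∀ i, Integrable (fun x => c i x * w i x * v x) (volume.restrict Ω) :=
    fun i => ((myIntMul (hw2 i) hv2).bdd_mul (hcesm i) (hcbd i).choose_spec).congr
      (.of_forall fun x => (mul_assoc _ _ _).symm)
  have Idv : Integrable (fun x => d x * v x * v x) (volume.restrict Ω) :=
    ((myIntMul hv2 hv2).bdd_mul hdesm hdbd.choose_spec).congr
      (.of_forall fun x => (mul_assoc _ _ _).symm)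
  have ISum : Integrable (fun x => ∑ i, (w i x) ^ 2) (volume.restrict Ω) :=
    integrable_finset_sum _ fun i _ => (hw2 i).integrable_sq
  have IAA : Integrable (fun x => ∑ i, ∑ j, A i j x * w j x * w i x) (volume.restrict Ω) :=
    integrable_finset_sum _ fun i _ => integrable_finset_sum _ fun j _ => IA i j
  have IBB : Integrable (fun x => ∑ i, (b i x * w i x * v x + c i x * w i x * v x))
      (volume.restrict Ω) :=
    integrable_finset_sum _ fun i _ => (Ib i).add (Ic i)
  -- step 1 : split the integral
  have hsplit : (∫ x in Ω, ((∑ i, ∑ j, A i j x * w j x * w i x)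
        + (∑ i, (b i x * w i x * v x + c i x * w i x * v x))
        + d x * v x * v x)) =
      (∫ x in Ω, ∑ i, ∑ j, A i j x * w j x * w i x)
        + ((∑ i, ∫ x in Ω, b i x * w i x * v x)
          + (∑ i, ∫ x in Ω, c i x * w i x * v x)
          + ∫ x in Ω, d x * v x * v x) := by
    have e1 : (∫ x in Ω, ((∑ i, ∑ j, A i j x * w j x * w i x)
          + (∑ i, (b i x * w i x * v x + c i x * w i x * v x))
          + d x * v x * v x)) =
        (∫ x in Ω, ((∑ i, ∑ j, A i j x * w j x * w i x)
          + (∑ i, (b i x * w i x * v x + c i x * w i x * v x)))) +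
          ∫ x in Ω, d x * v x * v x := integral_add (IAA.add IBB) Idv
    have e2 : (∫ x in Ω, ((∑ i, ∑ j, A i j x * w j x * w i x)
          + (∑ i, (b i x * w i x * v x + c i x * w i x * v x)))) =
        (∫ x in Ω, ∑ i, ∑ j, A i j x * w j x * w i x) +
          ∫ x in Ω, ∑ i, (b i x * w i x * v x + c i x * w i x * v x) :=
      integral_add IAA IBB
    have e3 : (∫ x in Ω, ∑ i, (b i x * w i x * v x + c i x * w i x * v x)) =
        ∑ i, ∫ x in Ω, (b i x * w i x * v x + c i x * w i x * v x) :=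
      integral_finset_sum _ fun i _ => (Ib i).add (Ic i)
    have e4 : ∀ i, (∫ x in Ω, (b i x * w i x * v x + c i x * w i x * v x)) =
        (∫ x in Ω, b i x * w i x * v x) + ∫ x in Ω, c i x * w i x * v x :=
      fun i => integral_add (Ib i) (Ic i)
    rw [e1, e2, e3, Finset.sum_congr rfl fun i _ => e4 i, Finset.sum_add_distrib]
    ring
  -- step 2 : ellipticity
  have h2 : α * (∫ x in Ω, ∑ i, (w i x) ^ 2) ≤
      ∫ x in Ω, ∑ i, ∑ j, A i j x * w j x * w i x := by
    rw [← integral_const_mul]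
    refine integral_mono_ae (ISum.const_mul α) IAA ?_
    filter_upwards [hell] with x hx
    set ξ : EucN N := WithLp.toLp 2 (fun i => w i x : Fin N → ℝ) with hξ
    have hxi : ∀ i, ξ i = w i x := fun i => rfl
    have hnorm : ‖ξ‖ ^ 2 = ∑ i, (w i x) ^ 2 := by
      rw [EuclideanSpace.norm_eq, Real.sq_sqrt (Finset.sum_nonneg fun i _ => by positivity)]
      exact Finset.sum_congr rfl fun i _ => by rw [hxi, Real.norm_eq_abs, sq_abs]
    have h := hx ξ
    rw [hnorm] at h
    refine h.trans_eq ?_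
    refine Finset.sum_congr rfl fun i _ => Finset.sum_congr rfl fun j _ => ?_
    rw [hxi, hxi, mul_right_comm]
  -- step 3 : the lower-order terms are nonnegative in the limit
  have Tb : ∀ i, Tendsto (fun k => ∫ x in Ω, b i x * pd i (φ k) x * φ k x) atTop
      (𝓝 (∫ x in Ω, b i x * w i x * v x)) := fun i =>
    myKey (hbesm i) (hbbd i).choose_spec hv2 (hw2 i) hφ2 (fun k => hpd2 k i) hφv (hφw i)
  have Tc : ∀ i, Tendsto (fun k => ∫ x in Ω, c i x * pd i (φ k) x * φ k x) atTop
      (𝓝 (∫ x in Ω, c i x * w i x * v x)) := fun i =>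
    myKey (hcesm i) (hcbd i).choose_spec hv2 (hw2 i) hφ2 (fun k => hpd2 k i) hφv (hφw i)
  have Td : Tendsto (fun k => ∫ x in Ω, d x * φ k x * φ k x) atTop
      (𝓝 (∫ x in Ω, d x * v x * v x)) :=
    myKey hdesm hdbd.choose_spec hv2 hv2 hφ2 hφ2 hφv hφv
  have hTS : Tendsto (fun k => (∑ i, ∫ x in Ω, b i x * pd i (φ k) x * φ k x)
      + (∑ i, ∫ x in Ω, c i x * pd i (φ k) x * φ k x)
      + ∫ x in Ω, d x * φ k x * φ k x) atTop
      (𝓝 ((∑ i, ∫ x in Ω, b i x * w i x * v x)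
        + (∑ i, ∫ x in Ω, c i x * w i x * v x)
        + ∫ x in Ω, d x * v x * v x)) :=
    ((tendsto_finset_sum _ fun i _ => Tb i).add (tendsto_finset_sum _ fun i _ => Tc i)).add Td
  have hSk0 : ∀ k, 0 ≤ (∑ i, ∫ x in Ω, b i x * pd i (φ k) x * φ k x)
      + (∑ i, ∫ x in Ω, c i x * pd i (φ k) x * φ k x)
      + ∫ x in Ω, d x * φ k x * φ k x := by
    intro k
    obtain ⟨hreg, hcs, hsub⟩ := hφprop k
    have hdiff : Differentiable ℝ (φ k) := hreg.differentiable (by simp)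
    set ψ : EucN N → ℝ := fun x => φ k x * φ k x with hψ
    have h0 := huniq ψ ((hreg.of_le (by exact_mod_cast le_top)).mul (hreg.of_le (by exact_mod_cast le_top)))
      (hcs.mul_right) (tsupport_mul_subset_left.trans hsub)
      (fun x => mul_self_nonneg _)
    -- integrability of the pieces for φ k
    have Ibk : ∀ i, Integrable (fun x => b i x * pd i (φ k) x * φ k x) (volume.restrict Ω) :=
      fun i => ((myIntMul (hpd2 k i) (hφ2 k)).bdd_mul (hbesm i) (hbbd i).choose_spec).congr
        (.of_forall fun x => (mul_assoc _ _ _).symm)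
    have Ick : ∀ i, Integrable (fun x => c i x * pd i (φ k) x * φ k x) (volume.restrict Ω) :=
      fun i => ((myIntMul (hpd2 k i) (hφ2 k)).bdd_mul (hcesm i) (hcbd i).choose_spec).congr
        (.of_forall fun x => (mul_assoc _ _ _).symm)
    have Idk : Integrable (fun x => d x * φ k x * φ k x) (volume.restrict Ω) :=
      ((myIntMul (hφ2 k) (hφ2 k)).bdd_mul hdesm hdbd.choose_spec).congr
        (.of_forall fun x => (mul_assoc _ _ _).symm)
    have hcongr : (∫ x in Ω, (d x * ψ x + ∑ j, (1 / 2 : ℝ) * (b j x + c j x) * pd j ψ x)) =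
        ∫ x in Ω, (d x * φ k x * φ k x
          + ∑ j, (b j x * pd j (φ k) x * φ k x + c j x * pd j (φ k) x * φ k x)) := by
      refine integral_congr_ae (.of_forall fun x => ?_)
      show d x * ψ x + (∑ j, (1 / 2 : ℝ) * (b j x + c j x) * pd j ψ x) =
        d x * φ k x * φ k x + ∑ j, (b j x * pd j (φ k) x * φ k x + c j x * pd j (φ k) x * φ k x)
      have hpd : ∀ j : Fin N, pd j ψ x = 2 * (φ k x * pd j (φ k) x) := fun j => myPdSq hdiff j x
      have h1 : (∑ j, (1 / 2 : ℝ) * (b j x + c j x) * pd j ψ x) =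
          ∑ j, (b j x * pd j (φ k) x * φ k x + c j x * pd j (φ k) x * φ k x) :=
        Finset.sum_congr rfl fun j _ => by rw [hpd j]; ring
      rw [h1]
      simp only [hψ]
      ring
    have ea : (∫ x in Ω, (d x * φ k x * φ k x
        + ∑ j, (b j x * pd j (φ k) x * φ k x + c j x * pd j (φ k) x * φ k x))) =
        (∫ x in Ω, d x * φ k x * φ k x) +
          ∫ x in Ω, ∑ j, (b j x * pd j (φ k) x * φ k x + c j x * pd j (φ k) x * φ k x) :=
      integral_add Idk (integrable_finset_sum _ fun j _ => (Ibk j).add (Ick j))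
    have eb : (∫ x in Ω, ∑ j, (b j x * pd j (φ k) x * φ k x + c j x * pd j (φ k) x * φ k x)) =
        ∑ j, ∫ x in Ω, (b j x * pd j (φ k) x * φ k x + c j x * pd j (φ k) x * φ k x) :=
      integral_finset_sum _ fun j _ => (Ibk j).add (Ick j)
    have ec : ∀ j : Fin N, (∫ x in Ω, (b j x * pd j (φ k) x * φ k x
        + c j x * pd j (φ k) x * φ k x)) =
        (∫ x in Ω, b j x * pd j (φ k) x * φ k x) + ∫ x in Ω, c j x * pd j (φ k) x * φ k x :=
      fun j => integral_add (Ibk j) (Ick j)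
    rw [hcongr, ea, eb, Finset.sum_congr rfl (fun j _ => ec j), Finset.sum_add_distrib] at h0
    linarith
  have h3 := ge_of_tendsto' hTS hSk0
  rw [hsplit]
  linarith

end
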